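/- Let d ∈ ℕ and let W be a distribution-valued bigraphon with uniform marginals (i.e., ∫_Ω W(x,y)(T) dy = λ(T) for almost every x, and symmetrically in y). Let W^d be the step approximation of W of depth d obtained by replacing each value W(x,y) by the measure that assigns to a set X the sum over the 2^d dyadic intervals I of W(x,y)(I)·2^d·λ(X ∩ I). Then the Latinon cut norm of W − W^d is at most 2^{1−d}, where the Latinon cut norm of a signed distribution-valued bigraphon U is sup over measurable R, C ⊆ Ω and intervals V ⊆ [0,1] of |∫_R ∫_C U(x,y)(V) dx dy|. -/

import Mathlib

open MeasureTheory
open scoped ENNReal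

def dyadic (d : ℕ) (i : Fin (2 ^ d)) : Set ℝ :=
  Set.Ico ((i : ℝ) / 2 ^ d) (((i : ℝ) + 1) / 2 ^ d)

lemma dyadic_meas (d : ℕ) (i : Fin (2^d)) : MeasurableSet (dyadic d i) := measurableSet_Ico

lemma dyadic_volume (d : ℕ) (i : Fin (2^d)) :
    volume (dyadic d i) = ENNReal.ofReal ((2:ℝ)^d)⁻¹ := by
  rw [dyadic, Real.volume_Ico]
  congr 1
  field_simp
  ring

lemma dyadic_iUnion (d : ℕ) : (⋃ i, dyadic d i) = Set.Ico (0:ℝ) 1 := by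
  have h2 : (0:ℝ) < 2^d := by positivity
  ext x
  simp only [Set.mem_iUnion, dyadic, Set.mem_Ico]
  constructor
  · rintro ⟨i, h1, h2'⟩
    constructor
    · calc (0:ℝ) ≤ (i:ℝ)/2^d := by positivity
        _ ≤ x := h1
    · calc x < ((i:ℝ)+1)/2^d := h2'
        _ ≤ 1 := by
          rw [div_le_one h2]
          have : (i:ℕ) + 1 ≤ 2^d := i.isLt
          exact_mod_cast this
  · rintro ⟨h0, h1⟩
    have hx2 : 0 ≤ x * 2^d := by positivity
    have hlt : x * 2^d < 2^d := by
      calc x * 2^d < 1 * 2^d := by gcongr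
        _ = 2^d := one_mul _
    refine ⟨⟨⌊x * 2^d⌋.toNat, ?_⟩, ?_, ?_⟩
    · have : (⌊x * 2^d⌋ : ℝ) < 2^d := (Int.floor_le _).trans_lt hlt
      have hnn : (0:ℤ) ≤ ⌊x * 2^d⌋ := Int.floor_nonneg.mpr hx2
      have h3 : ⌊x * 2^d⌋ < (2:ℤ)^d := by exact_mod_cast this
      zify [Int.toNat_of_nonneg hnn]
      exact h3
    · have hnn : (0:ℤ) ≤ ⌊x * 2^d⌋ := Int.floor_nonneg.mpr hx2
      have hc : ((⌊x * 2^d⌋.toNat : ℕ) : ℝ) = (⌊x * 2^d⌋ : ℝ) := by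
        exact_mod_cast Int.toNat_of_nonneg hnn
      simp only [Fin.val_mk]
      rw [hc, div_le_iff₀ h2]
      exact Int.floor_le _
    · have hnn : (0:ℤ) ≤ ⌊x * 2^d⌋ := Int.floor_nonneg.mpr hx2
      have hc : ((⌊x * 2^d⌋.toNat : ℕ) : ℝ) = (⌊x * 2^d⌋ : ℝ) := by
        exact_mod_cast Int.toNat_of_nonneg hnn
      simp only [Fin.val_mk]
      rw [hc, lt_div_iff₀ h2]
      exact Int.lt_floor_add_one _

lemma dyadic_disjoint (d : ℕ) : Pairwise (Function.onFun Disjoint (dyadic d)) := by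
  have key : ∀ i j : Fin (2^d), i < j → Disjoint (dyadic d i) (dyadic d j) := by
    intro i j hij
    rw [Set.disjoint_left]
    intro x hxi hxj
    have h2 : (0:ℝ) < 2^d := by positivity
    have hle : ((i:ℝ) + 1) ≤ (j:ℝ) := by
      have : (i:ℕ) + 1 ≤ (j:ℕ) := hij
      exact_mod_cast this
    have : x < x := by
      calc x < ((i:ℝ)+1)/2^d := hxi.2
        _ ≤ (j:ℝ)/2^d := by gcongr
        _ ≤ x := hxj.1
    exact absurd this (lt_irrefl x)
  intro i j hne
  rcases hne.lt_or_gt with h | h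
  · exact key i j h
  · exact (key j i h).symm

lemma dyadic_subset_of_between (d : ℕ) {V : Set ℝ} (hV : V.OrdConnected)
    {i j k : Fin (2^d)} (hij : i < j) (hjk : j < k)
    (hi : (V ∩ dyadic d i).Nonempty) (hk : (V ∩ dyadic d k).Nonempty) :
    dyadic d j ⊆ V := by
  obtain ⟨a, haV, hai⟩ := hi
  obtain ⟨b, hbV, hbk⟩ := hk
  intro t ht
  have h2 : (0:ℝ) < 2^d := by positivity
  have hij' : ((i:ℝ) + 1) ≤ (j:ℝ) := by
    have : (i:ℕ) + 1 ≤ (j:ℕ) := hij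
    exact_mod_cast this
  have hjk' : ((j:ℝ) + 1) ≤ (k:ℝ) := by
    have : (j:ℕ) + 1 ≤ (k:ℕ) := hjk
    exact_mod_cast this
  have hat : a ≤ t := by
    calc a ≤ ((i:ℝ)+1)/2^d := le_of_lt hai.2
      _ ≤ (j:ℝ)/2^d := by gcongr
      _ ≤ t := ht.1
  have htb : t ≤ b := by
    calc t ≤ ((j:ℝ)+1)/2^d := le_of_lt ht.2
      _ ≤ (k:ℝ)/2^d := by gcongr
      _ ≤ b := hbk.1
  exact hV.out haV hbV ⟨hat, htb⟩

lemma inner_bound {Ω : Type*} [MeasurableSpace Ω] (μ : Measure Ω) [IsProbabilityMeasure μ]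
    (W : Ω → Ω → Measure ℝ) (hprob : ∀ x y, IsProbabilityMeasure (W x y))
    (d : ℕ) (C : Set Ω)
    (V : Set ℝ) (hVoc : V.OrdConnected) (hVsub : V ⊆ Set.Icc 0 1) (hVmeas : MeasurableSet V)
    (x : Ω) (hWx : Measurable (W x))
    (hx : ∀ T : Set ℝ, MeasurableSet T → ∫⁻ y, W x y T ∂μ = volume (T ∩ Set.Icc 0 1)) :
    |∫ y in C, ((W x y V).toReal -
        ∑ i : Fin (2 ^ d),
          (W x y (dyadic d i)).toReal * 2 ^ d * (volume (V ∩ dyadic d i)).toReal) ∂μ|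
      ≤ 2 / 2 ^ d := by
  classical
  have h2 : (0:ℝ) < 2^d := by positivity
  have hmeasT : ∀ T : Set ℝ, MeasurableSet T → Measurable (fun y => (W x y T).toReal) :=
    fun T hT => ENNReal.measurable_toReal.comp ((Measure.measurable_coe hT).comp hWx)
  have hbdd : ∀ (T : Set ℝ) (y : Ω), (W x y T).toReal ≤ 1 := by
    intro T y
    haveI := hprob x y
    calc (W x y T).toReal ≤ ((1 : ℝ≥0∞)).toReal :=
          ENNReal.toReal_mono ENNReal.one_ne_top prob_le_one
      _ = 1 := by simp
  have hint : ∀ T : Set ℝ, MeasurableSet T → Integrable (fun y => (W x y T).toReal) μ := by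
    intro T hT
    refine (integrable_const (1:ℝ)).mono' (hmeasT T hT).aestronglyMeasurable ?_
    filter_upwards with y
    rw [Real.norm_eq_abs, abs_of_nonneg ENNReal.toReal_nonneg]
    exact hbdd T y
  have hfin : ∀ (T : Set ℝ) (y : Ω), W x y T ≠ ⊤ := fun T y => by
    haveI := hprob x y; exact measure_ne_top _ _
  have hA : ∀ T : Set ℝ, MeasurableSet T →
      ∫ y in C, (W x y T).toReal ∂μ ≤ (volume (T ∩ Set.Icc 0 1)).toReal := by
    intro T hT
    have h1 : ∫ y in C, (W x y T).toReal ∂μ ≤ ∫ y, (W x y T).toReal ∂μ :=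
      setIntegral_le_integral (hint T hT)
        (Filter.Eventually.of_forall fun y => ENNReal.toReal_nonneg)
    have h2' : ∫ y, (W x y T).toReal ∂μ = (∫⁻ y, W x y T ∂μ).toReal :=
      integral_toReal (((Measure.measurable_coe hT).comp hWx).aemeasurable)
        (Filter.Eventually.of_forall fun y => lt_top_iff_ne_top.mpr (hfin T y))
    rw [h2', hx T hT] at h1
    exact h1
  have hnonnegI : ∀ T : Set ℝ, 0 ≤ ∫ y in C, (W x y T).toReal ∂μ :=
    fun T => integral_nonneg fun y => ENNReal.toReal_nonneg
  have hm1 : MeasurableSet (V ∩ {(1:ℝ)}) := hVmeas.inter (measurableSet_singleton 1)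
  -- pointwise decomposition
  have hdecomp : ∀ y, (W x y V).toReal =
      (∑ i : Fin (2^d), (W x y (V ∩ dyadic d i)).toReal) + (W x y (V ∩ {1})).toReal := by
    intro y
    haveI := hprob x y
    have h1 : V = (⋃ i, V ∩ dyadic d i) ∪ (V ∩ {1}) := by
      rw [← Set.inter_iUnion, dyadic_iUnion, ← Set.inter_union_distrib_left]
      have h3 : Set.Ico (0:ℝ) 1 ∪ {1} = Set.Icc 0 1 := Set.Ico_union_right zero_le_one
      rw [h3, Set.inter_eq_left.mpr hVsub]
    have hdisj : Disjoint (⋃ i, V ∩ dyadic d i) (V ∩ {(1:ℝ)}) := by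
      rw [Set.disjoint_left]
      rintro t ht ⟨-, ht1⟩
      rw [Set.mem_singleton_iff] at ht1
      rw [Set.mem_iUnion] at ht
      obtain ⟨i, -, hti⟩ := ht
      have : t < 1 := by
        calc t < ((i:ℝ)+1)/2^d := hti.2
          _ ≤ 1 := by
            rw [div_le_one h2]
            have : (i:ℕ) + 1 ≤ 2^d := i.isLt
            exact_mod_cast this
      simp [ht1] at this
    have hpd : Pairwise (Function.onFun Disjoint (fun i => V ∩ dyadic d i)) :=
      fun i j hij => ((dyadic_disjoint d hij).inter_left' V).inter_right' V
    have := congrArg (W x y) h1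
    rw [measure_union hdisj hm1, measure_iUnion hpd
      (fun i => hVmeas.inter (dyadic_meas d i)), tsum_fintype] at this
    rw [this, ENNReal.toReal_add
      (ENNReal.sum_lt_top.mpr fun i _ => lt_top_iff_ne_top.mpr (hfin _ y)).ne (hfin _ y),
      ENNReal.toReal_sum (fun i _ => hfin _ y)]
  set F : Fin (2^d) → Ω → ℝ := fun i y => (W x y (V ∩ dyadic d i)).toReal -
      (W x y (dyadic d i)).toReal * 2^d * (volume (V ∩ dyadic d i)).toReal with hF
  have hfun : ∀ y, ((W x y V).toReal -
      ∑ i : Fin (2 ^ d),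
        (W x y (dyadic d i)).toReal * 2 ^ d * (volume (V ∩ dyadic d i)).toReal) =
      (∑ i : Fin (2^d), F i y) + (W x y (V ∩ {1})).toReal := by
    intro y
    rw [hdecomp y, hF]
    rw [Finset.sum_sub_distrib]
    ring
  have hintF : ∀ i, Integrable (fun y => F i y) (μ.restrict C) := by
    intro i
    exact ((hint _ (hVmeas.inter (dyadic_meas d i))).restrict).sub
      (((hint _ (dyadic_meas d i)).restrict.mul_const _).mul_const _)
  have hzero1 : ∫ y in C, (W x y (V ∩ {1})).toReal ∂μ = 0 := by
    have hl : ∫⁻ y, W x y (V ∩ {1}) ∂μ = 0 := by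
      rw [hx _ hm1]
      exact measure_mono_null (Set.inter_subset_left.trans Set.inter_subset_right)
        Real.volume_singleton
    have hae := (lintegral_eq_zero_iff ((Measure.measurable_coe hm1).comp hWx)).mp hl
    have hae' : (fun y => (W x y (V ∩ {1})).toReal) =ᵐ[μ.restrict C] (fun _ => (0:ℝ)) := by
      refine ae_restrict_of_ae (hae.mono fun y hy => ?_)
      simp only [Pi.zero_apply, Function.comp_apply] at hy
      simp [hy]
    rw [integral_congr_ae hae', integral_zero]
  have hrw : ∫ y in C, ((W x y V).toReal -
      ∑ i : Fin (2 ^ d),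
        (W x y (dyadic d i)).toReal * 2 ^ d * (volume (V ∩ dyadic d i)).toReal) ∂μ =
      ∑ i : Fin (2^d), ∫ y in C, F i y ∂μ := by
    rw [integral_congr_ae (Filter.Eventually.of_forall hfun),
      integral_add (integrable_finset_sum _ (fun i _ => hintF i)) ((hint _ hm1).restrict),
      hzero1, add_zero, integral_finset_sum _ (fun i _ => hintF i)]
  set S : Finset (Fin (2^d)) :=
    Finset.univ.filter (fun i => (V ∩ dyadic d i).Nonempty ∧ ¬ dyadic d i ⊆ V) with hS
  have hFzero : ∀ i ∉ S, ∀ y, F i y = 0 := by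
    intro i hi y
    simp only [hS, Finset.mem_filter, Finset.mem_univ, true_and, not_and, not_not] at hi
    by_cases hne : (V ∩ dyadic d i).Nonempty
    · have hsub := hi hne
      have h1 : V ∩ dyadic d i = dyadic d i := Set.inter_eq_self_of_subset_right hsub
      simp only [hF, h1, dyadic_volume, ENNReal.toReal_ofReal (le_of_lt (inv_pos.mpr h2))]
      rw [mul_assoc, mul_inv_cancel₀ (ne_of_gt h2), mul_one, sub_self]
    · rw [Set.not_nonempty_iff_eq_empty] at hne
      simp [hF, hne]
  have hScard : S.card ≤ 2 := by
    by_cases hne : S.Nonempty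
    · set T : Finset (Fin (2^d)) :=
        Finset.univ.filter (fun i => (V ∩ dyadic d i).Nonempty) with hT
      have hST : S ⊆ T := by
        intro i hi
        simp only [hS, Finset.mem_filter, Finset.mem_univ, true_and] at hi
        simp only [hT, Finset.mem_filter, Finset.mem_univ, true_and]
        exact hi.1
      have hTne : T.Nonempty := hne.mono hST
      have hsub2 : S ⊆ {T.min' hTne, T.max' hTne} := by
        intro i hi
        by_contra hcon
        simp only [Finset.mem_insert, Finset.mem_singleton, not_or] at hcon
        have h1 : T.min' hTne < i := lt_of_le_of_ne (T.min'_le i (hST hi)) (Ne.symm hcon.1)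
        have h2' : i < T.max' hTne := lt_of_le_of_ne (T.le_max' i (hST hi)) hcon.2
        have hminT := T.min'_mem hTne
        have hmaxT := T.max'_mem hTne
        simp only [hT, Finset.mem_filter, Finset.mem_univ, true_and] at hminT hmaxT
        have hsub := dyadic_subset_of_between d hVoc h1 h2' hminT hmaxT
        simp only [hS, Finset.mem_filter, Finset.mem_univ, true_and] at hi
        exact hi.2 hsub
      calc S.card ≤ ({T.min' hTne, T.max' hTne} : Finset _).card := Finset.card_le_card hsub2
        _ ≤ 2 := (Finset.card_insert_le _ _).trans (by simp)
    · rw [Finset.not_nonempty_iff_eq_empty] at hne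
      simp [hne]
  have hFbound : ∀ i ∈ S, |∫ y in C, F i y ∂μ| ≤ ((2:ℝ)^d)⁻¹ := by
    intro i _
    have hmi := dyadic_meas d i
    have hVi := hVmeas.inter hmi
    have hvolI : (volume (dyadic d i)).toReal = ((2:ℝ)^d)⁻¹ := by
      rw [dyadic_volume, ENNReal.toReal_ofReal (by positivity)]
    have hvolIne : volume (dyadic d i) ≠ ⊤ := by
      rw [dyadic_volume]; exact ENNReal.ofReal_ne_top
    have hIa : ∫ y in C, (W x y (V ∩ dyadic d i)).toReal ∂μ ≤ ((2:ℝ)^d)⁻¹ := by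
      refine (hA _ hVi).trans ?_
      calc (volume ((V ∩ dyadic d i) ∩ Set.Icc 0 1)).toReal
          ≤ (volume (dyadic d i)).toReal :=
            ENNReal.toReal_mono hvolIne (measure_mono fun t ht => ht.1.2)
        _ = ((2:ℝ)^d)⁻¹ := hvolI
    have hIa0 : 0 ≤ ∫ y in C, (W x y (V ∩ dyadic d i)).toReal ∂μ := hnonnegI _
    have hIb0 : 0 ≤ ∫ y in C, (W x y (dyadic d i)).toReal ∂μ := hnonnegI _
    have hIb1 : ∫ y in C, (W x y (dyadic d i)).toReal ∂μ ≤ ((2:ℝ)^d)⁻¹ := by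
      refine (hA _ hmi).trans ?_
      calc (volume (dyadic d i ∩ Set.Icc 0 1)).toReal
          ≤ (volume (dyadic d i)).toReal :=
            ENNReal.toReal_mono hvolIne (measure_mono Set.inter_subset_left)
        _ = ((2:ℝ)^d)⁻¹ := hvolI
    have hv0 : 0 ≤ (volume (V ∩ dyadic d i)).toReal := ENNReal.toReal_nonneg
    have hv1 : (volume (V ∩ dyadic d i)).toReal ≤ ((2:ℝ)^d)⁻¹ := by
      calc (volume (V ∩ dyadic d i)).toReal ≤ (volume (dyadic d i)).toReal :=
            ENNReal.toReal_mono hvolIne (measure_mono Set.inter_subset_right)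
        _ = ((2:ℝ)^d)⁻¹ := hvolI
    have hsplit : ∫ y in C, F i y ∂μ =
        (∫ y in C, (W x y (V ∩ dyadic d i)).toReal ∂μ) -
        (∫ y in C, (W x y (dyadic d i)).toReal ∂μ) * 2^d *
          (volume (V ∩ dyadic d i)).toReal := by
      simp only [hF]
      rw [integral_sub ((hint _ hVi).restrict)
        (((hint _ hmi).restrict.mul_const _).mul_const _),
        integral_mul_const, integral_mul_const]
    rw [hsplit]
    set p := ∫ y in C, (W x y (V ∩ dyadic d i)).toReal ∂μ
    set q := ∫ y in C, (W x y (dyadic d i)).toReal ∂μ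
    have hq1 : q * 2^d * (volume (V ∩ dyadic d i)).toReal ≤ ((2:ℝ)^d)⁻¹ := by
      calc q * 2^d * (volume (V ∩ dyadic d i)).toReal
          ≤ ((2:ℝ)^d)⁻¹ * 2^d * (volume (V ∩ dyadic d i)).toReal := by gcongr
        _ = (volume (V ∩ dyadic d i)).toReal := by
            rw [inv_mul_cancel₀ (ne_of_gt h2), one_mul]
        _ ≤ ((2:ℝ)^d)⁻¹ := hv1
    have hq0 : 0 ≤ q * 2^d * (volume (V ∩ dyadic d i)).toReal := by positivity
    rw [abs_sub_le_iff]
    constructor <;> linarith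
  rw [hrw]
  calc |∑ i : Fin (2^d), ∫ y in C, F i y ∂μ| = |∑ i ∈ S, ∫ y in C, F i y ∂μ| := by
        rw [← Finset.sum_subset (Finset.subset_univ S)]
        intro i _ hi
        rw [show (fun y => F i y) = (fun _ => (0:ℝ)) from funext (hFzero i hi), integral_zero]
    _ ≤ ∑ i ∈ S, |∫ y in C, F i y ∂μ| := Finset.abs_sum_le_sum_abs _ _
    _ ≤ ∑ i ∈ S, ((2:ℝ)^d)⁻¹ := Finset.sum_le_sum hFbound
    _ = S.card * ((2:ℝ)^d)⁻¹ := by rw [Finset.sum_const, nsmul_eq_mul]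
    _ ≤ 2 * ((2:ℝ)^d)⁻¹ := by
        gcongr
        exact_mod_cast hScard
    _ = 2 / 2^d := by rw [div_eq_mul_inv]

theorem step_approximation_latinon_cutnorm {Ω : Type*} [MeasurableSpace Ω]
    (μ : Measure Ω) [IsProbabilityMeasure μ]
    (W : Ω → Ω → Measure ℝ)
    (hmeas : Measurable (Function.uncurry W))
    (hprob : ∀ x y, IsProbabilityMeasure (W x y))
    (hsupp : ∀ x y, W x y (Set.Icc (0:ℝ) 1)ᶜ = 0)
    (hrow : ∀ᵐ x ∂μ, ∀ T : Set ℝ, MeasurableSet T →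
      ∫⁻ y, W x y T ∂μ = volume (T ∩ Set.Icc 0 1))
    (hcol : ∀ᵐ y ∂μ, ∀ T : Set ℝ, MeasurableSet T →
      ∫⁻ x, W x y T ∂μ = volume (T ∩ Set.Icc 0 1))
    (d : ℕ) :
    ∀ R C : Set Ω, MeasurableSet R → MeasurableSet C →
      ∀ V : Set ℝ, V.OrdConnected → V ⊆ Set.Icc 0 1 → MeasurableSet V →
        |∫ x in R, ∫ y in C,
            ((W x y V).toReal -
              ∑ i : Fin (2 ^ d),
                (W x y (dyadic d i)).toReal * 2 ^ d * (volume (V ∩ dyadic d i)).toReal)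
          ∂μ ∂μ| ≤ 2 / 2 ^ d := by
  intro R C hR hC V hVoc hVsub hVmeas
  have hpos : (0:ℝ) ≤ 2 / 2^d := by positivity
  have hbound : ∀ᵐ x ∂μ.restrict R, ‖∫ y in C,
      ((W x y V).toReal -
        ∑ i : Fin (2 ^ d),
          (W x y (dyadic d i)).toReal * 2 ^ d * (volume (V ∩ dyadic d i)).toReal) ∂μ‖
      ≤ 2 / 2 ^ d := by
    refine ae_restrict_of_ae (hrow.mono fun x hx => ?_)
    rw [Real.norm_eq_abs]
    exact inner_bound μ W hprob d C V hVoc hVsub hVmeas x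
      (hmeas.comp measurable_prodMk_left) hx
  rw [← Real.norm_eq_abs]
  calc ‖∫ x in R, ∫ y in C,
        ((W x y V).toReal -
          ∑ i : Fin (2 ^ d),
            (W x y (dyadic d i)).toReal * 2 ^ d * (volume (V ∩ dyadic d i)).toReal) ∂μ ∂μ‖
      ≤ (2 / 2^d) * (μ.restrict R Set.univ).toReal :=
        norm_integral_le_of_norm_le_const hbound
    _ ≤ (2 / 2^d) * 1 := by
        gcongr
        rw [Measure.restrict_apply_univ]
        calc (μ R).toReal ≤ ((1:ℝ≥0∞)).toReal :=
              ENNReal.toReal_mono ENNReal.one_ne_top prob_le_one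
          _ = 1 := by simp
    _ = 2 / 2^d := mul_one _
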